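/- For an integer k ≥ 1, let P = {p_1, …, p_{2k+1}} ⊂ ℝ² be the triangular chain, where p_j = (j/2, 0) if j is odd and p_j = (j/2, √3/2) if j is even. Then mst(P) = 2k, the maximum over all proper bipartitions P = R ∪ B of mst(R) + mst(B) equals 3k − 2, and hence the maximum EMST-ratio of P equals (3k−2)/(2k). -/

import Mathlib

open scoped Classical

/-- The length of a minimum spanning tree of a finite point set `S` in a metric space:
the infimum, over all trees with vertex set `S`, of the sum of distances over the edges. -/
noncomputable def mst {X : Type*} [MetricSpace X] (S : Finset X) : ℝ :=
  sInf {c : ℝ | ∃ G : SimpleGraph S, G.IsTree ∧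
    c = ∑ᶠ e ∈ G.edgeSet,
      Sym2.lift ⟨fun (u v : S) => dist (u : X) (v : X), fun _ _ => dist_comm _ _⟩ e}

open SimpleGraph

lemma pathGraph_walk_edge {n : ℕ} (a b : Fin n) (hab : (a : ℕ) + 1 = (b : ℕ))
    (p : (pathGraph n).Walk a b) : s(a, b) ∈ p.edges := by
  obtain ⟨d, hd, hfst, hsnd⟩ := p.exists_boundary_dart {x : Fin n | (x : ℕ) ≤ (a : ℕ)}
    (by simp) (by simp only [Set.mem_setOf_eq]; omega)
  simp only [Set.mem_setOf_eq, not_le] at hfst hsnd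
  have hadj := d.adj
  rw [pathGraph_adj] at hadj
  have hfa : d.fst = a := by apply Fin.ext; omega
  have hsb : d.snd = b := by apply Fin.ext; omega
  have hde : d.edge = s(a, b) := by
    rw [Dart.edge]
    congr 1
  rw [← hde]
  exact List.mem_map_of_mem hd

lemma pathGraph_isAcyclic (n : ℕ) : (pathGraph n).IsAcyclic := by
  rw [isAcyclic_iff_forall_adj_isBridge]
  intro v w hadj
  rw [isBridge_iff_adj_and_forall_walk_mem_edges]
  refine fun p => ?_
  rcases pathGraph_adj.mp hadj with h | h
  · exact pathGraph_walk_edge v w h p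
  · have := pathGraph_walk_edge w v h p.reverse
    rw [Walk.edges_reverse, List.mem_reverse] at this
    rwa [Sym2.eq_swap]

lemma pathGraph_isTree (n : ℕ) : (pathGraph (n + 1)).IsTree :=
  ⟨pathGraph_connected n, pathGraph_isAcyclic _⟩

lemma isTree_of_iso {V W : Type*} {G : SimpleGraph V} {H : SimpleGraph W}
    (e : G ≃g H) (h : G.IsTree) : H.IsTree := by
  constructor
  · exact (Iso.connected_iff e).mp h.isConnected
  · intro v c hc
    exact h.IsAcyclic (c.map e.symm.toHom) (hc.map e.symm.toEquiv.injective)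


lemma pathGraph_edgeFinset (n : ℕ) :
    (pathGraph (n + 1)).edgeFinset =
      Finset.image (fun i : Fin n => s(Fin.castSucc i, Fin.succ i)) Finset.univ := by
  ext e
  induction e with
  | _ u v =>
    simp only [mem_edgeFinset, mem_edgeSet, pathGraph_adj, Finset.mem_image,
      Finset.mem_univ, true_and]
    constructor
    · rintro (h | h)
      · refine ⟨⟨(u : ℕ), by omega⟩, ?_⟩
        rw [Sym2.eq_iff]
        left
        constructor <;> (apply Fin.ext; simp only [Fin.coe_castSucc, Fin.val_succ]; try omega)
      · refine ⟨⟨(v : ℕ), by omega⟩, ?_⟩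
        rw [Sym2.eq_iff]
        right
        constructor <;> (apply Fin.ext; simp only [Fin.coe_castSucc, Fin.val_succ]; try omega)
    · rintro ⟨i, hi⟩
      rw [Sym2.eq_iff] at hi
      rcases hi with ⟨h1, h2⟩ | ⟨h1, h2⟩
      · left; rw [← h1, ← h2]; simp
      · right; rw [← h1, ← h2]; simp

lemma sum_edgeFinset_comap {α β : Type*} [Fintype α] [Fintype β] (e : α ≃ β)
    (G : SimpleGraph β) (f : Sym2 α → ℝ) :
    ∑ x ∈ (G.comap ⇑e).edgeFinset, f x = ∑ x ∈ G.edgeFinset, f (Sym2.map ⇑e.symm x) := by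
  refine Finset.sum_nbij' (fun x => Sym2.map ⇑e x) (fun x => Sym2.map ⇑e.symm x) ?_ ?_ ?_ ?_ ?_
  · intro x hx
    induction x with
    | _ u v =>
      simp only [mem_edgeFinset, mem_edgeSet, comap_adj] at hx ⊢
      simpa using hx
  · intro x hx
    induction x with
    | _ u v =>
      simp only [mem_edgeFinset, mem_edgeSet, comap_adj] at hx ⊢
      simpa using hx
  · intro x _; induction x with
    | _ u v => simp
  · intro x _; induction x with
    | _ u v => simp
  · intro x _; induction x with
    | _ u v => simp


section MST
variable {X : Type*} [MetricSpace X]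

noncomputable abbrev wfun (S : Finset X) : Sym2 ↥S → ℝ :=
  Sym2.lift ⟨fun (u v : S) => dist (u : X) (v : X), fun _ _ => dist_comm _ _⟩

lemma finsum_cost (S : Finset X) (G : SimpleGraph ↥S) :
    ∑ᶠ e ∈ G.edgeSet, wfun S e = ∑ e ∈ G.edgeFinset, wfun S e := by
  rw [← coe_edgeFinset, finsum_mem_coe_finset]

lemma cost_nonneg (S : Finset X) (G : SimpleGraph ↥S) :
    0 ≤ ∑ e ∈ G.edgeFinset, wfun S e := by
  refine Finset.sum_nonneg fun e _ => ?_
  induction e with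
  | _ u v => simp [dist_nonneg]

lemma mst_le_cost (S : Finset X) (G : SimpleGraph ↥S) (hG : G.IsTree) :
    mst S ≤ ∑ e ∈ G.edgeFinset, wfun S e := by
  refine csInf_le ⟨0, ?_⟩ ⟨G, hG, (finsum_cost _ _).symm⟩
  rintro c ⟨G', _, rfl⟩
  rw [finsum_cost]
  exact cost_nonneg _ _

lemma mst_le_chain (S : Finset X) (n : ℕ) (g : Fin (n+1) → X) (hg : Function.Injective g)
    (hS : ∀ x, x ∈ S ↔ ∃ i, g i = x) :
    mst S ≤ ∑ i : Fin n, dist (g i.castSucc) (g i.succ) := by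
  have hmem : ∀ i, g i ∈ S := fun i => (hS _).2 ⟨i, rfl⟩
  let e0 : Fin (n+1) ≃ ↥S := Equiv.ofBijective (fun i => ⟨g i, hmem i⟩)
    ⟨fun i j h => hg (congrArg Subtype.val h),
     by rintro ⟨x, hx⟩; obtain ⟨i, rfl⟩ := (hS x).1 hx; exact ⟨i, rfl⟩⟩
  let T := (pathGraph (n+1)).comap ⇑e0.symm
  have hiso : T ≃g pathGraph (n+1) := { e0.symm with map_rel_iff' := Iff.rfl }
  have hT : T.IsTree := isTree_of_iso hiso.symm (pathGraph_isTree n)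
  refine le_trans (mst_le_cost S T hT) ?_
  rw [show T = (pathGraph (n+1)).comap ⇑e0.symm from rfl]
  erw [sum_edgeFinset_comap e0.symm (pathGraph (n+1)) (wfun S)]
  rw [pathGraph_edgeFinset n, Finset.sum_image ?inj]
  case inj =>
    intro i _ j _ hij
    rw [Sym2.eq_iff] at hij
    rcases hij with ⟨h1, h2⟩ | ⟨h1, h2⟩
    · exact Fin.castSucc_injective _ h1
    · have := congrArg Fin.val h1
      have := congrArg Fin.val h2
      simp only [Fin.coe_castSucc, Fin.val_succ] at *
      omega
  · apply le_of_eq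
    apply Finset.sum_congr rfl
    intro i _
    rw [Equiv.symm_symm, Sym2.map_pair_eq]
    simp only [wfun, Sym2.lift_mk]
    rfl

lemma card_mul_le_mst (S : Finset X) (hS : S.Nonempty) (d : ℝ) (hd : 0 ≤ d)
    (h : ∀ x ∈ S, ∀ y ∈ S, x ≠ y → d ≤ dist x y) :
    ((S.card : ℝ) - 1) * d ≤ mst S := by
  have hpos : 1 ≤ S.card := Finset.card_pos.mpr hS
  refine le_csInf ?_ ?_
  · obtain ⟨m, hm⟩ : ∃ m, S.card = m + 1 := ⟨S.card - 1, by omega⟩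
    let e0 : ↥S ≃ Fin (m+1) := (S.equivFin).trans (finCongr hm)
    let T := (pathGraph (m+1)).comap ⇑e0
    have hiso : T ≃g pathGraph (m+1) := { e0 with map_rel_iff' := Iff.rfl }
    exact ⟨_, T, isTree_of_iso hiso.symm (pathGraph_isTree m), rfl⟩
  · rintro c ⟨G, hG, rfl⟩
    rw [finsum_cost]
    have hcard : G.edgeFinset.card = S.card - 1 := by
      have := hG.card_edgeFinset
      rw [Fintype.card_coe] at this
      omega
    have hb : ∀ e ∈ G.edgeFinset, d ≤ wfun S e := by
      intro e he
      induction e with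
      | _ u v =>
        rw [mem_edgeFinset, mem_edgeSet] at he
        have hne : (u : X) ≠ (v : X) := fun hxy => (G.ne_of_adj he) (Subtype.ext hxy)
        simpa using h _ u.2 _ v.2 hne
    calc ((S.card : ℝ) - 1) * d = G.edgeFinset.card • d := by
          rw [hcard, nsmul_eq_mul, Nat.cast_sub hpos, Nat.cast_one]
      _ ≤ ∑ e ∈ G.edgeFinset, wfun S e := Finset.card_nsmul_le_sum _ _ _ hb

end MST


def chainW {α : Type*} (w : α → α → ℝ) : List α → ℝ
  | [] => 0
  | [_] => 0
  | a :: b :: l => w a b + chainW w (b :: l)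

theorem chainW_map {α β : Type*} (w : β → β → ℝ) (f : α → β) :
    ∀ L : List α, chainW w (L.map f) = chainW (fun a b => w (f a) (f b)) L
  | [] => rfl
  | [_] => rfl
  | a :: b :: t => by
      simp only [List.map_cons, chainW]
      rw [← List.map_cons (f := f) (a := b) (l := t), chainW_map w f (b :: t)]

theorem chainW_range' (w : ℕ → ℕ → ℝ) (hw : ∀ i, w i (i+1) = 1) :
    ∀ (m s : ℕ), chainW w (List.range' s (m+1)) = m
  | 0, s => by simp [show List.range' s 1 = [s] from rfl, chainW]
  | m+1, s => by
      rw [List.range'_succ, List.range'_succ, chainW, ← List.range'_succ,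
        chainW_range' w hw m (s+1), hw]
      push_cast
      ring

theorem chainW_eq_sum {α : Type*} (w : α → α → ℝ) :
    ∀ (n : ℕ) (L : List α) (h : L.length = n + 1),
      (∑ i : Fin n, w (L.get (Fin.cast h.symm i.castSucc)) (L.get (Fin.cast h.symm i.succ)))
        = chainW w L := by
  intro n
  induction n with
  | zero =>
    intro L h
    match L, h with
    | [a], _ => simp [chainW]
  | succ n ih =>
    intro L h
    match L, h with
    | a :: b :: t, h =>
      rw [Fin.sum_univ_succ]
      have h' : (b :: t).length = n + 1 := by simpa using h
      rw [show chainW w (a :: b :: t) = w a b + chainW w (b :: t) from rfl, ← ih (b :: t) h']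
      congr 1

lemma mst_le_list {X : Type*} [MetricSpace X] (L : List X) (hne : L ≠ []) (hnd : L.Nodup)
    (S : Finset X) (hS : ∀ x, x ∈ S ↔ x ∈ L) :
    mst S ≤ chainW (fun a b => dist a b) L := by
  obtain ⟨n, hn⟩ : ∃ n, L.length = n + 1 := by
    cases L with
    | nil => simp at hne
    | cons a t => exact ⟨t.length, rfl⟩
  have hginj : Function.Injective (fun i : Fin (n+1) => L.get (Fin.cast hn.symm i)) := by
    intro i j hij
    have := (List.nodup_iff_injective_get.mp hnd) hij
    exact Fin.ext (congrArg Fin.val this :)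
  have hS' : ∀ x, x ∈ S ↔ ∃ i : Fin (n+1), L.get (Fin.cast hn.symm i) = x := by
    intro x; rw [hS]
    constructor
    · intro hx
      obtain ⟨i, hi⟩ := List.mem_iff_get.mp hx
      exact ⟨Fin.cast hn i, by simpa using hi⟩
    · rintro ⟨i, rfl⟩
      exact L.get_mem _
  have := mst_le_chain S n _ hginj hS'
  rwa [chainW_eq_sum (fun a b => dist a b) n L hn] at this


section Geom
variable (p : ℕ → EuclideanSpace ℝ (Fin 2))
variable (hp : ∀ j, p j =
      if Odd j then (WithLp.equiv 2 (Fin 2 → ℝ)).symm ![(j : ℝ) / 2, 0]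
      else (WithLp.equiv 2 (Fin 2 → ℝ)).symm ![(j : ℝ) / 2, Real.sqrt 3 / 2])

lemma dist_two_points (a b c d : ℝ) :
    dist ((WithLp.equiv 2 (Fin 2 → ℝ)).symm ![a, b]) ((WithLp.equiv 2 (Fin 2 → ℝ)).symm ![c, d])
      = Real.sqrt ((a - c)^2 + (b - d)^2) := by
  rw [EuclideanSpace.dist_eq, Fin.sum_univ_two]
  simp [WithLp.equiv_symm_apply, PiLp.toLp_apply, Real.dist_eq, sq_abs]

include hp

lemma dist_p_same (i j : ℕ) (hpar : i % 2 = j % 2) :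
    dist (p i) (p j) = |(i : ℝ) - j| / 2 := by
  have hodd : Odd i ↔ Odd j := by
    simp only [Nat.odd_iff]; omega
  have h2 : ((i:ℝ)/2 - (j:ℝ)/2)^2 = (((i:ℝ) - j)/2)^2 := by ring_nf
  rw [hp i, hp j]
  by_cases h : Odd i
  · rw [if_pos h, if_pos (hodd.mp h), dist_two_points]
    rw [sub_self]
    rw [show (0:ℝ)^2 = 0 by ring, add_zero, h2, Real.sqrt_sq_eq_abs, abs_div]
    simp
  · rw [if_neg h, if_neg (fun ho => h (hodd.mpr ho)), dist_two_points]
    rw [sub_self]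
    rw [show (0:ℝ)^2 = 0 by ring, add_zero, h2, Real.sqrt_sq_eq_abs, abs_div]
    simp

lemma dist_p_diff (i j : ℕ) (hpar : i % 2 ≠ j % 2) :
    dist (p i) (p j) = Real.sqrt (((i : ℝ) - j)^2/4 + 3/4) := by
  have h2 : ((i:ℝ)/2 - (j:ℝ)/2)^2 = ((i:ℝ) - j)^2/4 := by ring_nf
  have h3 : (0 - Real.sqrt 3 / 2)^2 = 3/4 := by
    rw [zero_sub, neg_sq, div_pow, Real.sq_sqrt (by norm_num : (3:ℝ) ≥ 0)]
    norm_num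
  have h4 : (Real.sqrt 3 / 2 - 0)^2 = 3/4 := by
    rw [sub_zero, div_pow, Real.sq_sqrt (by norm_num : (3:ℝ) ≥ 0)]
    norm_num
  rw [hp i, hp j]
  by_cases h : Odd i
  · have hj : ¬ Odd j := by
      simp only [Nat.odd_iff] at h ⊢
      omega
    rw [if_pos h, if_neg hj, dist_two_points, h2, h3]
  · have hj : Odd j := by
      simp only [Nat.odd_iff] at h ⊢
      omega
    rw [if_neg h, if_pos hj, dist_two_points, h2, h4]

lemma p_injective : Function.Injective p := by
  intro i j hij
  have h0 : p i 0 = p j 0 := by rw [hij]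
  have hi0 : ∀ m : ℕ, p m 0 = (m : ℝ) / 2 := by
    intro m
    rw [hp m]
    by_cases h : Odd m
    · rw [if_pos h]; simp [WithLp.equiv_symm_apply, PiLp.toLp_apply]
    · rw [if_neg h]; simp [WithLp.equiv_symm_apply, PiLp.toLp_apply]
  rw [hi0 i, hi0 j] at h0
  have : (i : ℝ) = j := by linarith
  exact_mod_cast this

lemma dist_p_ge_one (i j : ℕ) (hij : i ≠ j) : 1 ≤ dist (p i) (p j) := by
  by_cases hpar : i % 2 = j % 2
  · rw [dist_p_same p hp i j hpar]
    have hz : 2 ≤ |(i : ℤ) - j| := by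
      have h2 : i + 2 ≤ j ∨ j + 2 ≤ i := by omega
      rcases h2 with h2 | h2
      · rw [abs_of_nonpos (by omega)]; omega
      · rw [abs_of_nonneg (by omega)]; omega
    have h2 : (2:ℝ) ≤ |(i:ℝ) - j| := by exact_mod_cast hz
    linarith
  · rw [dist_p_diff p hp i j hpar]
    rw [show (1:ℝ) = Real.sqrt 1 by simp]
    apply Real.sqrt_le_sqrt
    have hz : 1 ≤ |(i : ℤ) - j| := by
      have h2 : i + 1 ≤ j ∨ j + 1 ≤ i := by omega
      rcases h2 with h2 | h2
      · rw [abs_of_nonpos (by omega)]; omega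
      · rw [abs_of_nonneg (by omega)]; omega
    have h2 : (1:ℝ) ≤ |(i:ℝ) - j| := by exact_mod_cast hz
    have h1 : 1 ≤ ((i:ℝ) - j)^2 := by
      calc (1:ℝ) = 1^2 := by norm_num
        _ ≤ |(i:ℝ) - j|^2 := by apply pow_le_pow_left₀ (by norm_num) h2
        _ = ((i:ℝ) - j)^2 := sq_abs _
    linarith

lemma dist_p_consec (i : ℕ) : dist (p i) (p (i + 1)) = 1 := by
  rw [dist_p_diff p hp i (i+1) (by omega)]
  have h : ((i:ℝ) - (i+1:ℕ))^2 = 1 := by push_cast; ring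
  rw [h]
  rw [show (1:ℝ)/4 + 3/4 = 1 by norm_num, Real.sqrt_one]

lemma dist_p_le (i j : ℕ) (hij : i < j) : dist (p i) (p j) ≤ ((j:ℝ) - i + 1) / 2 := by
  have h1 : (1:ℝ) ≤ (j:ℝ) - i := by
    have : (i:ℝ) + 1 ≤ j := by exact_mod_cast hij
    linarith
  by_cases hpar : i % 2 = j % 2
  · rw [dist_p_same p hp i j hpar, abs_sub_comm, abs_of_nonneg (by linarith)]
    linarith
  · rw [dist_p_diff p hp i j hpar]
    rw [show ((i:ℝ) - j)^2 = ((j:ℝ) - i)^2 by ring]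
    have hnn : (0:ℝ) ≤ ((j:ℝ) - i + 1) / 2 := by linarith
    rw [show ((j:ℝ) - i + 1)/2 = Real.sqrt ((((j:ℝ) - i + 1)/2)^2) by
      rw [Real.sqrt_sq hnn]]
    apply Real.sqrt_le_sqrt
    nlinarith

lemma dist_p_even (i j : ℕ) (hij : i < j) (hpar : i % 2 = j % 2) :
    dist (p i) (p j) = ((j:ℝ) - i) / 2 := by
  have h1 : (1:ℝ) ≤ (j:ℝ) - i := by
    have : (i:ℝ) + 1 ≤ j := by exact_mod_cast hij
    linarith
  rw [dist_p_same p hp i j hpar, abs_sub_comm, abs_of_nonneg (by linarith)]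

end Geom


section Arith
variable (w : ℕ → ℕ → ℝ)
variable (hw1 : ∀ a b : ℕ, a < b → w a b ≤ ((b:ℝ) - a + 1)/2)
variable (hw2 : ∀ a b : ℕ, a < b → a % 2 = b % 2 → w a b ≤ ((b:ℝ) - a)/2)

include hw1

lemma chain_bound1 : ∀ (l : List ℕ) (a : ℕ), List.Chain (· < ·) a l →
    chainW w (a :: l) ≤ (((a :: l).getLast (List.cons_ne_nil a l) : ℝ) - a + l.length)/2 := by
  intro l
  induction l with
  | nil => intro a _; simp [chainW]
  | cons b t ih =>
    intro a hc
    rw [List.Chain, List.chain_cons] at hc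
    obtain ⟨hab, hc'⟩ := hc
    have h1 := ih b hc'
    have h2 := hw1 a b hab
    rw [List.getLast_cons (List.cons_ne_nil b t)]
    rw [show chainW w (a :: b :: t) = w a b + chainW w (b :: t) from rfl]
    have hlen : ((b :: t).length : ℝ) = (t.length : ℝ) + 1 := by push_cast [List.length_cons]; ring
    push_cast [List.length_cons]
    linarith

include hw2

lemma chain_bound2 : ∀ (l : List ℕ) (a : ℕ), List.Chain (· < ·) a l →
    ((a :: l).getLast (List.cons_ne_nil a l) + a + l.length) % 2 = 1 →
    chainW w (a :: l) ≤ (((a :: l).getLast (List.cons_ne_nil a l) : ℝ) - a + l.length - 1)/2 := by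
  intro l
  induction l with
  | nil =>
    intro a _ hpar
    simp only [List.getLast_singleton, List.length_nil] at hpar
    omega
  | cons b t ih =>
    intro a hc hpar
    rw [List.Chain, List.chain_cons] at hc
    obtain ⟨hab, hc'⟩ := hc
    rw [List.getLast_cons (List.cons_ne_nil b t)] at hpar ⊢
    rw [show chainW w (a :: b :: t) = w a b + chainW w (b :: t) from rfl]
    by_cases hp : a % 2 = b % 2
    · have h2 := hw2 a b hab hp
      have h1 := chain_bound1 w hw1 t b hc'
      push_cast [List.length_cons]
      linarith
    · have hL : (b :: t).getLast (List.cons_ne_nil b t) + b + t.length ≡ 1 [MOD 2] := by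
        simp only [List.length_cons] at hpar
        unfold Nat.ModEq
        omega
      have h1 := ih b hc' hL
      have h2 := hw1 a b hab
      push_cast [List.length_cons]
      linarith
end Arith


section Bip
variable (w : ℕ → ℕ → ℝ)
variable (hw1 : ∀ a b : ℕ, a < b → w a b ≤ ((b:ℝ) - a + 1)/2)
variable (hw2 : ∀ a b : ℕ, a < b → a % 2 = b % 2 → w a b ≤ ((b:ℝ) - a)/2)

/-- data about a sorted nonempty finset -/
lemma sort_decomp (A : Finset ℕ) (hA : A.Nonempty) :
    ∃ (a : ℕ) (l : List ℕ), A.sort (· ≤ ·) = a :: l ∧ List.Chain (· < ·) a l ∧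
      a = A.min' hA ∧ (a :: l).getLast (List.cons_ne_nil a l) = A.max' hA ∧
      l.length = A.card - 1 := by
  have hlen : (A.sort (· ≤ ·)).length = A.card := Finset.length_sort _
  have hpos : 0 < (A.sort (· ≤ ·)).length := by
    rw [hlen]; exact Finset.card_pos.mpr hA
  obtain ⟨a, l, hal⟩ : ∃ a l, A.sort (· ≤ ·) = a :: l := by
    cases h : A.sort (· ≤ ·) with
    | nil => rw [h] at hpos; simp at hpos
    | cons x t => exact ⟨x, t, rfl⟩
  refine ⟨a, l, hal, ?_, ?_, ?_, ?_⟩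
  · have hsort := (Finset.sortedLT_sort A).pairwise
    rw [hal] at hsort
    exact List.isChain_iff_pairwise.mpr hsort
  · have h := Finset.min'_eq_sorted_zero (s := A) (h := hA)
    simp only [hal, List.getElem_cons_zero] at h
    exact h.symm
  · have h := Finset.max'_eq_sorted_last (s := A) (h := hA)
    simp only [hal] at h
    rw [List.getLast_eq_getElem]
    exact h.symm
  · have := hlen
    rw [hal] at this
    simp only [List.length_cons] at this
    omega

include hw1 hw2

lemma bipartite_bound (k : ℕ) (hk : 1 ≤ k) (A B : Finset ℕ) (hA : A.Nonempty) (hB : B.Nonempty)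
    (hd : Disjoint A B) (hu : A ∪ B = Finset.Icc 1 (2*k+1)) :
    chainW w (A.sort (· ≤ ·)) + chainW w (B.sort (· ≤ ·)) ≤ 3*(k:ℝ) - 2 := by
  obtain ⟨a, l, hal, hcl, hamin, hamax, hlen⟩ := sort_decomp A hA
  obtain ⟨b, m, hbm, hcm, hbmin, hbmax, hmlen⟩ := sort_decomp B hB
  set MA := A.max' hA with hMA
  set MB := B.max' hB with hMB
  -- basic membership facts
  have hsubA : A ⊆ Finset.Icc 1 (2*k+1) := hu ▸ Finset.subset_union_left
  have hsubB : B ⊆ Finset.Icc 1 (2*k+1) := hu ▸ Finset.subset_union_right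
  have hMAmem := A.max'_mem hA
  have hMBmem := B.max'_mem hB
  have hmAmem := A.min'_mem hA
  have hmBmem := B.min'_mem hB
  have hMAle : MA ≤ 2*k+1 := (Finset.mem_Icc.mp (hsubA hMAmem)).2
  have hMBle : MB ≤ 2*k+1 := (Finset.mem_Icc.mp (hsubB hMBmem)).2
  have hmage : 1 ≤ A.min' hA := (Finset.mem_Icc.mp (hsubA hmAmem)).1
  have hmbge : 1 ≤ B.min' hB := (Finset.mem_Icc.mp (hsubB hmBmem)).1
  have hMne : MA ≠ MB := by
    intro h
    have hmem : MA ∈ B := by rw [h]; exact B.max'_mem hB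
    exact Finset.disjoint_left.mp hd hMAmem hmem
  have hmne : A.min' hA ≠ B.min' hB := by
    intro h
    have hmem : A.min' hA ∈ B := by rw [h]; exact B.min'_mem hB
    exact Finset.disjoint_left.mp hd hmAmem hmem
  have hminle : A.min' hA ≤ MA := A.min'_le _ hMAmem
  have hminleB : B.min' hB ≤ MB := B.min'_le _ hMBmem
  have hcard : A.card + B.card = 2*k+1 := by
    have := Finset.card_union_of_disjoint hd
    rw [hu, Nat.card_Icc] at this
    omega
  have hcA : 1 ≤ A.card := Finset.card_pos.mpr hA
  have hcB : 1 ≤ B.card := Finset.card_pos.mpr hB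
  -- casts
  set mA := A.min' hA
  set mB := B.min' hB
  have hb1 := chain_bound1 w hw1 l a hcl
  have hb1' := chain_bound1 w hw1 m b hcm
  rw [hamax] at hb1
  rw [hbmax] at hb1'
  rw [hal, hbm]
  rw [hamin] at hb1 ⊢
  rw [hbmin] at hb1' ⊢
  have hlenA : (l.length : ℝ) = (A.card : ℝ) - 1 := by
    rw [hlen]; push_cast [Nat.cast_sub hcA]; ring
  have hlenB : (m.length : ℝ) = (B.card : ℝ) - 1 := by
    rw [hmlen]; push_cast [Nat.cast_sub hcB]; ring
  have hcardR : (A.card : ℝ) + (B.card : ℝ) = 2*(k:ℝ)+1 := by exact_mod_cast hcard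
  by_cases hcrit : MA + MB ≤ 4*k ∨ 4 ≤ mA + mB
  · -- easy case
    have hsum : (MA : ℝ) + MB - mA - mB ≤ 4*(k:ℝ) - 3 := by
      rcases hcrit with h | h
      · have h1 : (MA:ℝ) + MB ≤ 4*k := by exact_mod_cast h
        have h2 : (3:ℝ) ≤ (mA:ℝ) + mB := by
          have : 3 ≤ mA + mB := by omega
          exact_mod_cast this
        linarith
      · have h1 : (MA:ℝ) + MB ≤ 4*k+1 := by
          have : MA + MB ≤ 4*k+1 := by omega
          exact_mod_cast this
        have h2 : (4:ℝ) ≤ (mA:ℝ) + mB := by exact_mod_cast h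
        linarith
    linarith
  · -- critical case: MA + MB = 4k+1, mA + mB = 3
    push_neg at hcrit
    obtain ⟨hM, hm⟩ := hcrit
    have hMeq : MA + MB = 4*k+1 := by omega
    have hmeq : mA + mB = 3 := by omega
    -- parity: one of the two lists has odd (last + head + length-1)
    have hpar : (MA + mA + l.length) % 2 = 1 ∨ (MB + mB + m.length) % 2 = 1 := by
      have hlc : l.length = A.card - 1 := hlen
      have hmc : m.length = B.card - 1 := hmlen
      omega
    rcases hpar with hodd | hodd
    · have hb2 := chain_bound2 w hw1 hw2 l a hcl (by rw [hamax, hamin]; omega)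
      rw [hamax, hamin] at hb2
      have hMR : (MA:ℝ) + MB = 4*(k:ℝ)+1 := by exact_mod_cast hMeq
      have hmR : (mA:ℝ) + mB = 3 := by exact_mod_cast hmeq
      linarith
    · have hb2 := chain_bound2 w hw1 hw2 m b hcm (by rw [hbmax, hbmin]; omega)
      rw [hbmax, hbmin] at hb2
      have hMR : (MA:ℝ) + MB = 4*(k:ℝ)+1 := by exact_mod_cast hMeq
      have hmR : (mA:ℝ) + mB = 3 := by exact_mod_cast hmeq
      linarith
end Bip

theorem triangular_chain_max_mst_ratio (k : ℕ) (hk : 1 ≤ k)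
    (p : ℕ → EuclideanSpace ℝ (Fin 2))
    (hp : ∀ j, p j =
      if Odd j then (WithLp.equiv 2 (Fin 2 → ℝ)).symm ![(j : ℝ) / 2, 0]
      else (WithLp.equiv 2 (Fin 2 → ℝ)).symm ![(j : ℝ) / 2, Real.sqrt 3 / 2])
    (P : Finset (EuclideanSpace ℝ (Fin 2)))
    (hP : P = (Finset.Icc 1 (2 * k + 1)).image p) :
    mst P = 2 * (k : ℝ) ∧
    IsGreatest {x : ℝ | ∃ R B : Finset (EuclideanSpace ℝ (Fin 2)),
        R.Nonempty ∧ B.Nonempty ∧ Disjoint R B ∧ R ∪ B = P ∧ x = mst R + mst B}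
      (3 * (k : ℝ) - 2) ∧
    IsGreatest {x : ℝ | ∃ R B : Finset (EuclideanSpace ℝ (Fin 2)),
        R.Nonempty ∧ B.Nonempty ∧ Disjoint R B ∧ R ∪ B = P ∧
        x = (mst R + mst B) / mst P}
      ((3 * (k : ℝ) - 2) / (2 * (k : ℝ))) := by
  have hpinj : Function.Injective p := p_injective p hp
  have hkR : (1:ℝ) ≤ (k:ℝ) := by exact_mod_cast hk
  -- card of P
  have hcardP : P.card = 2 * k + 1 := by
    rw [hP, Finset.card_image_of_injective _ hpinj, Nat.card_Icc]
    omega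
  have hPne : P.Nonempty := by
    rw [← Finset.card_pos, hcardP]; omega
  -- Part 1 : mst P = 2k
  have hmstP_le : mst P ≤ 2 * (k:ℝ) := by
    have hlist := mst_le_list ((List.range' 1 (2*k+1)).map p)
      (by simp)
      (List.Nodup.map hpinj (by apply List.nodup_range'; norm_num))
      P
      (by
        intro x
        rw [hP]
        simp only [Finset.mem_image, List.mem_map, List.mem_range'_1, Finset.mem_Icc]
        constructor
        · rintro ⟨j, hj, rfl⟩; exact ⟨j, ⟨hj.1, by omega⟩, rfl⟩
        · rintro ⟨j, hj, rfl⟩; exact ⟨j, ⟨hj.1, by omega⟩, rfl⟩)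
    rw [chainW_map] at hlist
    rw [chainW_range' _ (fun i => dist_p_consec p hp i) (2*k) 1] at hlist
    have : ((2*k : ℕ) : ℝ) = 2*(k:ℝ) := by push_cast; ring
    linarith
  have hmstP_ge : 2*(k:ℝ) ≤ mst P := by
    have hb := card_mul_le_mst P hPne 1 (by norm_num) (by
      intro x hx y hy hxy
      rw [hP, Finset.mem_image] at hx hy
      obtain ⟨i, hi, rfl⟩ := hx
      obtain ⟨j, hj, rfl⟩ := hy
      exact dist_p_ge_one p hp i j (fun h => hxy (by rw [h])))
    rw [hcardP] at hb
    push_cast at hb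
    linarith
  have hmstP : mst P = 2*(k:ℝ) := le_antisymm hmstP_le hmstP_ge
  -- achiever sets
  have hp1ne : p 1 ≠ p (2*k+1) := fun h => by
    have := hpinj h; omega
  have hdistR0 : dist (p 1) (p (2*k+1)) = (k:ℝ) := by
    rw [dist_p_even p hp 1 (2*k+1) (by omega) (by omega)]
    push_cast; ring
  have hR0ne : ({p 1, p (2*k+1)} : Finset (EuclideanSpace ℝ (Fin 2))).Nonempty :=
    ⟨p 1, by simp⟩
  have hmstR0 : mst ({p 1, p (2*k+1)} : Finset (EuclideanSpace ℝ (Fin 2))) = (k:ℝ) := by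
    apply le_antisymm
    · have hlist := mst_le_list [p 1, p (2*k+1)] (by simp) (by simp [hp1ne])
        ({p 1, p (2*k+1)} : Finset (EuclideanSpace ℝ (Fin 2)))
        (by intro x; simp)
      have hch : chainW (fun a b => dist a b) [p 1, p (2*k+1)]
          = dist (p 1) (p (2*k+1)) := by
        simp [chainW]
      rw [hch, hdistR0] at hlist
      exact hlist
    · have hb := card_mul_le_mst ({p 1, p (2*k+1)} : Finset (EuclideanSpace ℝ (Fin 2)))
        hR0ne (k:ℝ) (by linarith) (by
          intro x hx y hy hxy
          simp only [Finset.mem_insert, Finset.mem_singleton] at hx hy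
          rcases hx with rfl | rfl <;> rcases hy with rfl | rfl
          · exact absurd rfl hxy
          · rw [hdistR0]
          · rw [_root_.dist_comm, hdistR0]
          · exact absurd rfl hxy)
      rw [Finset.card_pair hp1ne] at hb
      norm_num at hb
      exact hb
  have hcardB0 : ((Finset.Icc 2 (2*k)).image p).card = 2*k - 1 := by
    rw [Finset.card_image_of_injective _ hpinj, Nat.card_Icc]
    omega
  have hB0ne : ((Finset.Icc 2 (2*k)).image p).Nonempty := by
    rw [← Finset.card_pos, hcardB0]; omega
  have hmstB0 : mst ((Finset.Icc 2 (2*k)).image p) = 2*(k:ℝ) - 2 := by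
    obtain ⟨m, hm⟩ : ∃ m, 2*k - 1 = m + 1 := ⟨2*k - 2, by omega⟩
    have hmcast : (m:ℝ) = 2*(k:ℝ) - 2 := by
      have h2 : m + 2 = 2*k := by omega
      have := congrArg (Nat.cast : ℕ → ℝ) h2
      push_cast at this
      linarith
    apply le_antisymm
    · have hlist := mst_le_list ((List.range' 2 (2*k-1)).map p)
        (by
          intro hcon
          have := congrArg List.length hcon
          simp [List.length_range'] at this
          omega)
        (List.Nodup.map hpinj (by apply List.nodup_range'; norm_num))
        ((Finset.Icc 2 (2*k)).image p)
        (by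
          intro x
          simp only [Finset.mem_image, List.mem_map, List.mem_range'_1, Finset.mem_Icc]
          constructor
          · rintro ⟨j, hj, rfl⟩; exact ⟨j, ⟨hj.1, by omega⟩, rfl⟩
          · rintro ⟨j, hj, rfl⟩; exact ⟨j, ⟨hj.1, by omega⟩, rfl⟩)
      rw [chainW_map, hm, chainW_range' _ (fun i => dist_p_consec p hp i) m 2] at hlist
      linarith
    · have hb := card_mul_le_mst ((Finset.Icc 2 (2*k)).image p) hB0ne 1 (by norm_num) (by
        intro x hx y hy hxy
        rw [Finset.mem_image] at hx hy
        obtain ⟨i, hi, rfl⟩ := hx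
        obtain ⟨j, hj, rfl⟩ := hy
        exact dist_p_ge_one p hp i j (fun h => hxy (by rw [h])))
      rw [hcardB0] at hb
      have hc : ((2*k - 1 : ℕ) : ℝ) = 2*(k:ℝ) - 1 := by
        have h2 : (2*k - 1) + 1 = 2*k := by omega
        have := congrArg (Nat.cast : ℕ → ℝ) h2
        push_cast at this
        linarith
      rw [hc] at hb
      linarith
  -- partition facts for the achiever
  have hdisj0 : Disjoint ({p 1, p (2*k+1)} : Finset (EuclideanSpace ℝ (Fin 2)))
      ((Finset.Icc 2 (2*k)).image p) := by
    rw [Finset.disjoint_left]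
    intro x hx hxB
    simp only [Finset.mem_insert, Finset.mem_singleton] at hx
    rw [Finset.mem_image] at hxB
    obtain ⟨j, hj, hje⟩ := hxB
    rw [Finset.mem_Icc] at hj
    rcases hx with rfl | rfl
    · have := hpinj hje; omega
    · have := hpinj hje; omega
  have hunion0 : ({p 1, p (2*k+1)} : Finset (EuclideanSpace ℝ (Fin 2)))
      ∪ (Finset.Icc 2 (2*k)).image p = P := by
    ext x
    simp only [Finset.mem_union, Finset.mem_insert, Finset.mem_singleton,
      Finset.mem_image, Finset.mem_Icc, hP]
    constructor
    · rintro ((rfl | rfl) | ⟨j, hj, rfl⟩)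
      · exact ⟨1, by omega, rfl⟩
      · exact ⟨2*k+1, by omega, rfl⟩
      · exact ⟨j, by omega, rfl⟩
    · rintro ⟨j, hj, rfl⟩
      by_cases h1 : j = 1
      · subst h1; exact Or.inl (Or.inl rfl)
      by_cases h2 : j = 2*k+1
      · subst h2; exact Or.inl (Or.inr rfl)
      · exact Or.inr ⟨j, by omega, rfl⟩
  -- upper bound for all bipartitions
  have hub2 : ∀ x ∈ {x : ℝ | ∃ R B : Finset (EuclideanSpace ℝ (Fin 2)),
        R.Nonempty ∧ B.Nonempty ∧ Disjoint R B ∧ R ∪ B = P ∧ x = mst R + mst B},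
      x ≤ 3*(k:ℝ) - 2 := by
    rintro x ⟨R, B, hRne, hBne, hdj, hun, rfl⟩
    have hRP : R ⊆ P := hun ▸ Finset.subset_union_left
    have hBP : B ⊆ P := hun ▸ Finset.subset_union_right
    have hidx : ∀ (C : Finset (EuclideanSpace ℝ (Fin 2))), C ⊆ P →
        C = ((Finset.Icc 1 (2*k+1)).filter (fun j => p j ∈ C)).image p := by
      intro C hCP
      ext y
      simp only [Finset.mem_image, Finset.mem_filter, Finset.mem_Icc]
      constructor
      · intro hy
        have hyP := hCP hy
        rw [hP, Finset.mem_image] at hyP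
        obtain ⟨j, hj, rfl⟩ := hyP
        exact ⟨j, ⟨Finset.mem_Icc.mp hj, hy⟩, rfl⟩
      · rintro ⟨j, ⟨_, hj⟩, rfl⟩
        exact hj
    set A := (Finset.Icc 1 (2*k+1)).filter (fun j => p j ∈ R) with hAdef
    set Bi := (Finset.Icc 1 (2*k+1)).filter (fun j => p j ∈ B) with hBidef
    have hRA : R = A.image p := hidx R hRP
    have hBBi : B = Bi.image p := hidx B hBP
    have hAne : A.Nonempty := by
      obtain ⟨y, hy⟩ := hRne
      rw [hRA, Finset.mem_image] at hy
      obtain ⟨j, hj, _⟩ := hy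
      exact ⟨j, hj⟩
    have hBine : Bi.Nonempty := by
      obtain ⟨y, hy⟩ := hBne
      rw [hBBi, Finset.mem_image] at hy
      obtain ⟨j, hj, _⟩ := hy
      exact ⟨j, hj⟩
    have hdisjAB : Disjoint A Bi := by
      rw [Finset.disjoint_left]
      intro j hjA hjB
      rw [hAdef, Finset.mem_filter] at hjA
      rw [hBidef, Finset.mem_filter] at hjB
      exact Finset.disjoint_left.mp hdj hjA.2 hjB.2
    have hunionAB : A ∪ Bi = Finset.Icc 1 (2*k+1) := by
      ext j
      simp only [hAdef, hBidef, Finset.mem_union, Finset.mem_filter]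
      constructor
      · rintro (⟨h, _⟩ | ⟨h, _⟩) <;> exact h
      · intro hj
        have hjP : p j ∈ P := by
          rw [hP]
          exact Finset.mem_image_of_mem p hj
        rw [← hun, Finset.mem_union] at hjP
        rcases hjP with h | h
        · exact Or.inl ⟨hj, h⟩
        · exact Or.inr ⟨hj, h⟩
    have hwa1 : ∀ a b : ℕ, a < b → dist (p a) (p b) ≤ ((b:ℝ) - a + 1)/2 :=
      fun a b h => dist_p_le p hp a b h
    have hwa2 : ∀ a b : ℕ, a < b → a % 2 = b % 2 → dist (p a) (p b) ≤ ((b:ℝ) - a)/2 :=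
      fun a b h h2 => le_of_eq (dist_p_even p hp a b h h2)
    have hmstchain : ∀ (C : Finset (EuclideanSpace ℝ (Fin 2))) (I : Finset ℕ),
        I.Nonempty → C = I.image p →
        mst C ≤ chainW (fun a b => dist (p a) (p b)) (I.sort (· ≤ ·)) := by
      intro C I hIne hCI
      have hlist := mst_le_list ((I.sort (· ≤ ·)).map p)
        (by
          intro hcon
          have := congrArg List.length hcon
          rw [List.length_map, Finset.length_sort, List.length_nil] at this
          exact absurd (Finset.card_eq_zero.mp this) (Finset.nonempty_iff_ne_empty.mp hIne))
        (List.Nodup.map hpinj (Finset.sort_nodup _ _))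
        C
        (by
          intro y
          rw [hCI]
          simp only [Finset.mem_image, List.mem_map]
          constructor
          · rintro ⟨j, hj, rfl⟩
            exact ⟨j, (Finset.mem_sort _).mpr hj, rfl⟩
          · rintro ⟨j, hj, rfl⟩
            exact ⟨j, (Finset.mem_sort _).mp hj, rfl⟩)
      rwa [chainW_map] at hlist
    have hbound := bipartite_bound (fun a b => dist (p a) (p b)) hwa1 hwa2 k hk A Bi
      hAne hBine hdisjAB hunionAB
    have h1 := hmstchain R A hAne hRA
    have h2 := hmstchain B Bi hBine hBBi
    linarith
  have hmem2 : (3*(k:ℝ) - 2) ∈ {x : ℝ | ∃ R B : Finset (EuclideanSpace ℝ (Fin 2)),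
        R.Nonempty ∧ B.Nonempty ∧ Disjoint R B ∧ R ∪ B = P ∧ x = mst R + mst B} :=
    ⟨{p 1, p (2*k+1)}, (Finset.Icc 2 (2*k)).image p, hR0ne, hB0ne, hdisj0, hunion0,
      by rw [hmstR0, hmstB0]; ring⟩
  have hkpos : (0:ℝ) < 2*(k:ℝ) := by linarith
  refine ⟨hmstP, ⟨hmem2, fun x hx => hub2 x hx⟩, ?_, ?_⟩
  · exact ⟨{p 1, p (2*k+1)}, (Finset.Icc 2 (2*k)).image p, hR0ne, hB0ne, hdisj0, hunion0,
      by rw [hmstR0, hmstB0, hmstP]; ring⟩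
  · rintro x ⟨R, B, hRne, hBne, hdj, hun, rfl⟩
    rw [hmstP, div_le_div_iff_of_pos_right hkpos]
    exact hub2 _ ⟨R, B, hRne, hBne, hdj, hun, rfl⟩
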